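/- If G is a doubly saturated R(s,t)-good graph with s, t ≥ 3, then every vertex of G has degree at least 2(s−2) and degree at most n − 2t + 3, where n is the number of vertices of G. -/

import Mathlib

/-- The cyclic distance ‖x‖ = min(x mod n, n − (x mod n)) for x ∈ ℤ/nℤ. -/
def cyclicDist (n : ℕ) (x : ZMod n) : ℕ := min x.val (n - x.val)

/-- The circulant graph on `ZMod n` with distance set `S`: `x ~ y` iff `‖x - y‖ ∈ S`. -/
def circ (n : ℕ) (S : Set ℕ) : SimpleGraph (ZMod n) :=
  SimpleGraph.fromRel (fun x y => cyclicDist n (x - y) ∈ S)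

/-- `G` is `R(s,t)`-good: no clique of size `s` and no independent set of size `t`. -/
def RGood {V : Type*} (s t : ℕ) (G : SimpleGraph V) : Prop :=
  G.CliqueFree s ∧ Gᶜ.CliqueFree t

/-- `G` is doubly saturated `R(s,t)`-good. -/
def DoublySaturated {V : Type*} (s t : ℕ) (G : SimpleGraph V) : Prop :=
  RGood s t G ∧
  (∀ u v : V, u ≠ v → ¬ G.Adj u v → ¬ (G ⊔ SimpleGraph.edge u v).CliqueFree s) ∧
  (∀ u v : V, G.Adj u v → ¬ ((G.deleteEdges {s(u, v)})ᶜ.CliqueFree t)) ∧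
  G ≠ ⊤ ∧ Gᶜ ≠ ⊤

open Finset SimpleGraph

section Aux

variable {V : Type*}

/-- Hammer–Hansen–Simeone style lemma: if all cliques inside `W` have size at most `k`, and
every element of `W` is avoided by some `k`-clique inside `W`, then `|W| ≥ 2k`. -/
lemma hhs_lemma [DecidableEq V] (G : SimpleGraph V) (W : Finset V) (k : ℕ)
    (hW : W.Nonempty)
    (H1 : ∀ C : Finset V, C ⊆ W → G.IsClique (C : Set V) → C.card ≤ k)
    (H2 : ∀ a ∈ W, ∃ C : Finset V, C ⊆ W ∧ G.IsClique (C : Set V) ∧ C.card = k ∧ a ∉ C) :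
    2 * k ≤ W.card := by
  classical
  set D : Finset V → Finset V :=
    fun X => (W \ X).filter (fun y => ∃ x ∈ X, ¬ G.Adj x y) with hD
  obtain ⟨a₀, ha₀⟩ := hW
  obtain ⟨S, hSW, hSc, hScard, -⟩ := H2 a₀ ha₀
  -- Lemma 1': for a clique X ⊆ W and a k-clique B ⊆ W : |X| ≤ |D X ∩ B| + |X ∩ B|
  have lem1 : ∀ X B : Finset V, X ⊆ W → G.IsClique (X : Set V) → B ⊆ W →
      G.IsClique (B : Set V) → B.card = k →
      X.card ≤ (D X ∩ B).card + (X ∩ B).card := by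
    intro X B hXW hXc hBW hBc hBk
    have hclique : G.IsClique ((X ∪ (B \ D X) : Finset V) : Set V) := by
      intro x hx y hy hxy
      simp only [coe_union, Set.mem_union, mem_coe, coe_sdiff, Set.mem_diff] at hx hy
      have key : ∀ z, z ∈ X → ∀ w, w ∈ B ∧ w ∉ D X → z ≠ w → G.Adj z w := by
        intro z hz w ⟨hwB, hwD⟩ hzw
        by_cases hwX : w ∈ X
        · exact hXc hz hwX hzw
        · have hwW : w ∈ W := hBW hwB
          have : ¬ (∃ x ∈ X, ¬ G.Adj x w) := by
            intro hP
            exact hwD (by simp only [hD, mem_filter, mem_sdiff]; exact ⟨⟨hwW, hwX⟩, hP⟩)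
          push_neg at this
          exact this z hz
      rcases hx with hx | hx <;> rcases hy with hy | hy
      · exact hXc hx hy hxy
      · exact key x hx y hy hxy
      · exact (key y hy x hx hxy.symm).symm
      · exact hBc hx.1 hy.1 hxy
    have hsub : (X ∪ (B \ D X)) ⊆ W := union_subset hXW (Subset.trans (sdiff_subset) hBW)
    have hcard := H1 _ hsub hclique
    have e1 : (X ∪ (B \ D X)).card + (X ∩ (B \ D X)).card = X.card + (B \ D X).card :=
      card_union_add_card_inter _ _
    have e2 : (B \ D X).card + (B ∩ D X).card = B.card := card_sdiff_add_card_inter _ _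
    have e3 : (X ∩ (B \ D X)).card ≤ (X ∩ B).card :=
      card_le_card (by intro z hz; simp only [mem_inter, mem_sdiff] at hz ⊢; exact ⟨hz.1, hz.2.1⟩)
    have e4 : (B ∩ D X).card = (D X ∩ B).card := by rw [inter_comm]
    omega
  -- Main claim by strong induction: for X ⊆ S, |X| ≤ |D X|
  have main : ∀ n : ℕ, ∀ X : Finset V, X.card ≤ n → X ⊆ S → X.card ≤ (D X).card := by
    intro n
    induction n with
    | zero => intro X h _; omega
    | succ n ih =>
      intro X hXn hXS
      rcases X.eq_empty_or_nonempty with rfl | ⟨x, hx⟩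
      · simp
      have hxW : x ∈ W := hSW (hXS hx)
      obtain ⟨B, hBW, hBc, hBk, hxB⟩ := H2 x hxW
      set Y := X ∩ B with hY
      have hYX : Y ⊆ X := inter_subset_left
      have hYlt : Y.card < X.card := by
        apply card_lt_card
        exact ⟨hYX, fun hc => hxB (mem_inter.mp (hc hx)).2⟩
      have hYcard : Y.card ≤ n := by omega
      have ihY : Y.card ≤ (D Y).card := ih Y hYcard (Subset.trans hYX hXS)
      have hXc : G.IsClique (X : Set V) := hSc.subset (by exact_mod_cast hXS)
      have hlem := lem1 X B (Subset.trans hXS hSW) hXc hBW hBc hBk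
      -- D Y ⊆ D X
      have hDYX : D Y ⊆ D X := by
        intro y hy
        simp only [hD, mem_filter, mem_sdiff] at hy ⊢
        obtain ⟨⟨hyW, hyY⟩, x', hx', hnadj⟩ := hy
        have hyX : y ∉ X := by
          intro hyX
          have hx'X : x' ∈ X := hYX hx'
          have : y ≠ x' := fun hc => hyY (hc ▸ hx')
          exact hnadj (hSc (hXS hx'X) (hXS hyX) this.symm)
        exact ⟨⟨hyW, hyX⟩, x', hYX hx', hnadj⟩
      -- D Y ∩ B = ∅
      have hDYB : Disjoint (D Y) B := by
        rw [Finset.disjoint_left]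
        intro y hy hyB
        simp only [hD, mem_filter, mem_sdiff] at hy
        obtain ⟨⟨hyW, hyY⟩, x', hx', hnadj⟩ := hy
        have hx'B : x' ∈ B := (mem_inter.mp hx').2
        have : y ≠ x' := fun hc => hyY (hc ▸ hx')
        exact hnadj (hBc hx'B hyB this.symm)
      have hsplit : (D X ∩ B).card + (D Y).card ≤ (D X).card := by
        rw [← card_union_of_disjoint (Finset.disjoint_left.mpr
          (fun a ha hb => (Finset.disjoint_left.mp hDYB hb) (mem_inter.mp ha).2))]
        apply card_le_card
        apply union_subset inter_subset_left hDYX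
      have hYeq : (X ∩ B).card = Y.card := rfl
      omega
  have hfinal := main S.card S le_rfl Subset.rfl
  have hDS : Disjoint S (D S) := by
    rw [disjoint_right]
    intro y hy
    simp only [hD, mem_filter, mem_sdiff] at hy
    exact hy.1.2
  have hsub : S ∪ D S ⊆ W := union_subset hSW (by intro y hy; simp only [hD, mem_filter, mem_sdiff] at hy; exact hy.1.1)
  have := card_le_card hsub
  rw [card_union_of_disjoint hDS] at this
  omega

/-- From the addition-saturation: for nonadjacent `u ≠ v`, there is an `(s-2)`-clique of common
neighbors of `u` and `v`. -/
lemma exists_add_clique {s : ℕ} (G : SimpleGraph V) [DecidableEq V]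
    (hKs : G.CliqueFree s)
    (hadd : ∀ u v : V, u ≠ v → ¬ G.Adj u v → ¬ (G ⊔ SimpleGraph.edge u v).CliqueFree s)
    {u v : V} (huv : u ≠ v) (hna : ¬ G.Adj u v) :
    ∃ A : Finset V, G.IsClique (A : Set V) ∧ A.card = s - 2 ∧
      (∀ a ∈ A, G.Adj u a) ∧ (∀ a ∈ A, G.Adj v a) := by
  have h := hadd u v huv hna
  rw [SimpleGraph.CliqueFree] at h
  push_neg at h
  obtain ⟨C, hC⟩ := h
  have hedge : ∀ x y : V, (SimpleGraph.edge u v).Adj x y →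
      (x = u ∧ y = v) ∨ (x = v ∧ y = u) := by
    intro x y hxy; rw [edge_adj] at hxy; exact hxy.1
  have huC : u ∈ C := by
    by_contra huC
    apply hKs C
    refine ⟨?_, hC.card_eq⟩
    intro x hx y hy hxy
    rcases (sup_adj _ _ _ _).mp (hC.isClique hx hy hxy) with h | h
    · exact h
    · rcases hedge x y h with ⟨rfl, rfl⟩ | ⟨rfl, rfl⟩
      · exact absurd hx huC
      · exact absurd hy huC
  have hvC : v ∈ C := by
    by_contra hvC
    apply hKs C
    refine ⟨?_, hC.card_eq⟩
    intro x hx y hy hxy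
    rcases (sup_adj _ _ _ _).mp (hC.isClique hx hy hxy) with h | h
    · exact h
    · rcases hedge x y h with ⟨rfl, rfl⟩ | ⟨rfl, rfl⟩
      · exact absurd hy hvC
      · exact absurd hx hvC
  refine ⟨(C.erase u).erase v, ?_, ?_, ?_, ?_⟩
  · intro x hx y hy hxy
    simp only [coe_erase, Set.mem_diff, Set.mem_singleton_iff] at hx hy
    obtain ⟨⟨hxC, hxu⟩, hxv⟩ := hx
    obtain ⟨⟨hyC, hyu⟩, hyv⟩ := hy
    rcases (sup_adj _ _ _ _).mp (hC.isClique hxC hyC hxy) with h | h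
    · exact h
    · rcases hedge x y h with ⟨rfl, rfl⟩ | ⟨rfl, rfl⟩
      · exact absurd rfl hxu
      · exact absurd rfl hxv
  · rw [card_erase_of_mem (mem_erase.mpr ⟨(Ne.symm huv), hvC⟩), card_erase_of_mem huC,
      hC.card_eq]
    omega
  · intro a ha
    simp only [mem_erase] at ha
    obtain ⟨hav, hau, haC⟩ := ha
    have : u ≠ a := Ne.symm hau
    rcases (sup_adj _ _ _ _).mp (hC.isClique huC haC this) with h | h
    · exact h
    · rcases hedge u a h with ⟨-, rfl⟩ | ⟨h1, -⟩
      · exact absurd rfl hav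
      · exact absurd h1 huv
  · intro a ha
    simp only [mem_erase] at ha
    obtain ⟨hav, hau, haC⟩ := ha
    have : v ≠ a := Ne.symm hav
    rcases (sup_adj _ _ _ _).mp (hC.isClique hvC haC this) with h | h
    · exact h
    · rcases hedge v a h with ⟨h1, -⟩ | ⟨-, rfl⟩
      · exact absurd h1 huv.symm
      · exact absurd rfl hau


/-- From the deletion-saturation: for an edge `ab`, there is a `t`-set containing `a` and `b`
which is independent except for the pair `ab`. -/
lemma exists_del_indep {t : ℕ} (G : SimpleGraph V)
    (hKtc : Gᶜ.CliqueFree t)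
    (hdel : ∀ u v : V, G.Adj u v → ¬ ((G.deleteEdges {s(u, v)})ᶜ.CliqueFree t))
    {a b : V} (hab : G.Adj a b) :
    ∃ I : Finset V, I.card = t ∧ a ∈ I ∧ b ∈ I ∧
      (∀ x ∈ I, ∀ y ∈ I, x ≠ y → s(x, y) ≠ s(a, b) → ¬ G.Adj x y) := by
  have h := hdel a b hab
  rw [SimpleGraph.CliqueFree] at h
  push_neg at h
  obtain ⟨I, hI⟩ := h
  have key : ∀ x ∈ I, ∀ y ∈ I, x ≠ y → s(x, y) ≠ s(a, b) → ¬ G.Adj x y := by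
    intro x hx y hy hxy hpair hGxy
    have := hI.isClique (by exact_mod_cast hx) (by exact_mod_cast hy) hxy
    rw [compl_adj] at this
    exact this.2 (by rw [deleteEdges_adj]; exact ⟨hGxy, by simpa using hpair⟩)
  have haI : a ∈ I := by
    by_contra haI
    apply hKtc I
    refine ⟨?_, hI.card_eq⟩
    intro x hx y hy hxy
    rw [compl_adj]
    refine ⟨hxy, ?_⟩
    apply key x (by exact_mod_cast hx) y (by exact_mod_cast hy) hxy
    intro hc
    rw [Sym2.eq_iff] at hc
    rcases hc with ⟨rfl, rfl⟩ | ⟨rfl, rfl⟩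
    · exact haI (by exact_mod_cast hx)
    · exact haI (by exact_mod_cast hy)
  have hbI : b ∈ I := by
    by_contra hbI
    apply hKtc I
    refine ⟨?_, hI.card_eq⟩
    intro x hx y hy hxy
    rw [compl_adj]
    refine ⟨hxy, ?_⟩
    apply key x (by exact_mod_cast hx) y (by exact_mod_cast hy) hxy
    intro hc
    rw [Sym2.eq_iff] at hc
    rcases hc with ⟨rfl, rfl⟩ | ⟨rfl, rfl⟩
    · exact hbI (by exact_mod_cast hy)
    · exact hbI (by exact_mod_cast hx)
  exact ⟨I, hI.card_eq, haI, hbI, key⟩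

/-- The lower degree bound for doubly saturated graphs. -/
lemma lower_bound {s t : ℕ} (hs : 3 ≤ s) (ht : 3 ≤ t) [Fintype V]
    (G : SimpleGraph V) (hG : DoublySaturated s t G) (v : V)
    [Fintype (G.neighborSet v)] : 2 * (s - 2) ≤ G.degree v := by
  classical
  obtain ⟨⟨hKs, hKtc⟩, hadd, hdel, hGtop, hGctop⟩ := hG
  -- find a non-neighbor of v
  have hnonnbr : ∃ u : V, u ≠ v ∧ ¬ G.Adj u v := by
    by_cases hv : ∃ w, G.Adj v w
    · obtain ⟨w, hw⟩ := hv
      obtain ⟨I, hIcard, hvI, hwI, hkey⟩ := exists_del_indep G hKtc hdel hw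
      have : ¬ I ⊆ {v, w} := by
        intro hsub
        have := card_le_card hsub
        have h2 : ({v, w} : Finset V).card ≤ 2 := card_insert_le _ _ |>.trans (by simp)
        omega
      rw [Finset.not_subset] at this
      obtain ⟨z, hzI, hz⟩ := this
      simp only [mem_insert, mem_singleton] at hz
      push_neg at hz
      obtain ⟨hzv, hzw⟩ := hz
      refine ⟨z, hzv, ?_⟩
      apply hkey z hzI v hvI hzv
      simp only [ne_eq, Sym2.eq_iff]
      push_neg
      constructor
      · intro h; exact absurd h hzv
      · intro h; exact absurd h hzw
    · push_neg at hv
      have hcard : 2 ≤ Fintype.card V := by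
        by_contra hc
        push_neg at hc
        have hsub : Subsingleton V := by
          rw [← Fintype.card_le_one_iff_subsingleton]; omega
        apply hGtop
        ext x y
        have : x = y := Subsingleton.elim x y
        subst this
        simp
      obtain ⟨u, hu⟩ := Fintype.exists_ne_of_one_lt_card (by omega) v
      exact ⟨u, hu, fun h => hv u h.symm⟩
  obtain ⟨u, huv, hna⟩ := hnonnbr
  obtain ⟨A, hAc, hAcard, hAu, hAv⟩ := exists_add_clique G hKs hadd huv hna
  set W := G.neighborFinset v with hW
  have hAW : A ⊆ W := fun a ha => (mem_neighborFinset _ _ _).mpr (hAv a ha)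
  have hWne : W.Nonempty := by
    have : A.Nonempty := card_pos.mp (by omega)
    obtain ⟨a, ha⟩ := this
    exact ⟨a, hAW ha⟩
  have H1 : ∀ C : Finset V, C ⊆ W → G.IsClique (C : Set V) → C.card ≤ s - 2 := by
    intro C hCW hCc
    by_contra hc
    push_neg at hc
    have hle : s - 1 ≤ C.card := by omega
    obtain ⟨C', hC'sub, hC'card⟩ := C.exists_subset_card_eq hle
    have hvC' : v ∉ C' := by
      intro hc'
      have : v ∈ W := hCW (hC'sub hc')
      rw [mem_neighborFinset] at this
      exact G.irrefl this
    have hclique : G.IsClique ((insert v C' : Finset V) : Set V) := by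
      rw [coe_insert]
      apply (hCc.subset (by exact_mod_cast hC'sub)).insert
      intro b hb _
      have : b ∈ W := hCW (hC'sub hb)
      rwa [mem_neighborFinset] at this
    apply hKs (insert v C')
    refine ⟨hclique, ?_⟩
    rw [card_insert_of_notMem hvC', hC'card]
    omega
  have H2 : ∀ a ∈ W, ∃ C : Finset V, C ⊆ W ∧ G.IsClique (C : Set V) ∧ C.card = s - 2 ∧ a ∉ C := by
    intro a haW
    have hva : G.Adj v a := (mem_neighborFinset _ _ _).mp haW
    obtain ⟨I, hIcard, hvI, haI, hkey⟩ := exists_del_indep G hKtc hdel hva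
    have : ¬ I ⊆ {v, a} := by
      intro hsub
      have := card_le_card hsub
      have h2 : ({v, a} : Finset V).card ≤ 2 := card_insert_le _ _ |>.trans (by simp)
      omega
    rw [Finset.not_subset] at this
    obtain ⟨z, hzI, hz⟩ := this
    simp only [mem_insert, mem_singleton] at hz
    push_neg at hz
    obtain ⟨hzv, hza⟩ := hz
    have hzvna : ¬ G.Adj z v := by
      apply hkey z hzI v hvI hzv
      simp only [ne_eq, Sym2.eq_iff]; push_neg
      exact ⟨fun h => absurd h hzv, fun h => absurd h hza⟩
    have hzana : ¬ G.Adj z a := by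
      apply hkey z hzI a haI hza
      simp only [ne_eq, Sym2.eq_iff]; push_neg
      refine ⟨fun h => absurd h hzv, fun h => absurd h hza⟩
    obtain ⟨B, hBc, hBcard, hBz, hBv⟩ := exists_add_clique G hKs hadd hzv hzvna
    refine ⟨B, fun b hb => (mem_neighborFinset _ _ _).mpr (hBv b hb), hBc, hBcard, ?_⟩
    intro haB
    exact hzana (hBz a haB)
  have := hhs_lemma G W (s - 2) hWne H1 H2
  rwa [hW, card_neighborFinset_eq_degree] at this

/-- Complementation swaps the roles of `s` and `t` in double saturation. -/
lemma compl_doublySaturated {s t : ℕ} (G : SimpleGraph V) (hG : DoublySaturated s t G) :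
    DoublySaturated t s Gᶜ := by
  obtain ⟨⟨hKs, hKtc⟩, hadd, hdel, hGtop, hGctop⟩ := hG
  refine ⟨⟨hKtc, by rwa [compl_compl]⟩, ?_, ?_, hGctop, by rwa [compl_compl]⟩
  · intro u v huv hna
    have hadj : G.Adj u v := by
      by_contra hc
      exact hna ((compl_adj _ _ _).mpr ⟨huv, hc⟩)
    have he : Gᶜ ⊔ SimpleGraph.edge u v = (G.deleteEdges {s(u, v)})ᶜ := by
      ext x y
      simp only [sup_adj, compl_adj, edge_adj, deleteEdges_adj, Set.mem_singleton_iff,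
        Sym2.eq_iff]
      constructor
      · rintro (⟨hxy, hnadj⟩ | ⟨h, hxy⟩)
        · exact ⟨hxy, fun hc => absurd hc.1 hnadj⟩
        · exact ⟨hxy, fun hc => hc.2 (by tauto)⟩
      · rintro ⟨hxy, hc⟩
        by_cases hG' : G.Adj x y
        · right
          refine ⟨?_, hxy⟩
          by_contra hc'
          push_neg at hc'
          exact hc ⟨hG', by tauto⟩
        · exact Or.inl ⟨hxy, hG'⟩
    rw [he]
    exact hdel u v hadj
  · intro u v hadj
    rw [compl_adj] at hadj
    obtain ⟨huv, hna⟩ := hadj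
    have he : (Gᶜ.deleteEdges {s(u, v)})ᶜ = G ⊔ SimpleGraph.edge u v := by
      ext x y
      simp only [compl_adj, deleteEdges_adj, sup_adj, edge_adj, Set.mem_singleton_iff,
        Sym2.eq_iff]
      constructor
      · rintro ⟨hxy, hc⟩
        by_cases hG' : G.Adj x y
        · exact Or.inl hG'
        · right
          refine ⟨?_, hxy⟩
          by_contra hc'
          push_neg at hc'
          exact hc ⟨⟨hxy, hG'⟩, by tauto⟩
      · rintro (h | ⟨h, hxy⟩)
        · exact ⟨h.ne, fun hc => hc.1.2 h⟩
        · exact ⟨hxy, fun hc => hc.2 (by tauto)⟩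
    rw [he]
    exact hadd u v huv hna

end Aux

theorem stmt_8 (s t : ℕ) (hs : 3 ≤ s) (ht : 3 ≤ t)
    {V : Type*} [Fintype V] (G : SimpleGraph V) [DecidableRel G.Adj]
    (hG : DoublySaturated s t G) :
    ∀ v : V, 2 * (s - 2) ≤ G.degree v ∧
      (G.degree v : ℤ) ≤ (Fintype.card V : ℤ) - 2 * t + 3 := by
  classical
  intro v
  refine ⟨lower_bound hs ht G hG v, ?_⟩
  have h2 : 2 * (t - 2) ≤ Gᶜ.degree v :=
    lower_bound ht hs Gᶜ (compl_doublySaturated G hG) v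
  have h3 : Gᶜ.degree v = Fintype.card V - 1 - G.degree v := degree_compl G v
  have h4 : G.degree v < Fintype.card V := G.degree_lt_card_verts v
  omega
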